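/- Let G = (V, E) be an undirected connected simple graph on V = {1,…,N} with N ≥ 2. For each i ∈ V let a_i ∈ ℝ^N and b_i ∈ ℝ, assume the matrix A with rows a_1ᵀ,…,a_Nᵀ is nonsingular, let x* = A⁻¹ b where b = (b_1,…,b_N)ᵀ, let α_i > 0 for i ∈ V and β_{{i,j}} > 0 for {i,j} ∈ E, and let V(x) = Σ_{i ∈ V} α_i (a_iᵀ x_i − b_i)² + Σ_{{i,j} ∈ E} β_{{i,j}} ‖x_i − x_j‖². Then for every solution x : [0,∞) → (ℝ^N)^N of the system ẋ_i(t) = −α_i (a_iᵀ x_i(t) − b_i) a_i − Σ_{j : {i,j} ∈ E} β_{{i,j}} (x_i(t) − x_j(t)), the function t ↦ V(x(t)) is nonincreasing, and it is strictly positive for all t whenever x(0) ≠ (x*,…,x*). -/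

import Mathlib

open Matrix Finset

lemma sym_pairs {N : ℕ} (G : SimpleGraph (Fin N)) [DecidableRel G.Adj] (f : Fin N → Fin N → ℝ) :
    ∑ p ∈ Finset.univ.filter (fun p : Fin N × Fin N => p.1 < p.2 ∧ G.Adj p.1 p.2),
        (f p.1 p.2 + f p.2 p.1)
    = ∑ i : Fin N, ∑ j ∈ Finset.univ.filter (fun j => G.Adj i j), f i j := by
  have hR : (∑ i : Fin N, ∑ j ∈ Finset.univ.filter (fun j => G.Adj i j), f i j)
      = ∑ p ∈ Finset.univ.filter (fun p : Fin N × Fin N => G.Adj p.1 p.2), f p.1 p.2 := by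
    rw [Finset.sum_filter]
    rw [Fintype.sum_prod_type]
    simp [Finset.sum_filter]
  rw [hR, Finset.sum_add_distrib]
  have hswap : ∑ p ∈ Finset.univ.filter (fun p : Fin N × Fin N => p.1 < p.2 ∧ G.Adj p.1 p.2),
      f p.2 p.1
      = ∑ p ∈ Finset.univ.filter (fun p : Fin N × Fin N => p.2 < p.1 ∧ G.Adj p.1 p.2), f p.1 p.2 := by
    apply Finset.sum_nbij' (fun p => Prod.swap p) (fun p => Prod.swap p) <;>
      simp [G.adj_comm]
  rw [hswap]
  rw [← Finset.sum_filter_add_sum_filter_not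
    (Finset.univ.filter (fun p : Fin N × Fin N => G.Adj p.1 p.2)) (fun p => p.1 < p.2)]
  congr 1
  · apply Finset.sum_congr _ (fun _ _ => rfl)
    rw [Finset.filter_filter]
    apply Finset.filter_congr; intro p _; tauto
  · apply Finset.sum_congr _ (fun _ _ => rfl)
    rw [Finset.filter_filter]
    apply Finset.filter_congr; intro p _
    simp only [not_lt, decide_eq_true_eq]
    constructor
    · rintro ⟨hlt, hadj⟩; exact ⟨hadj, le_of_lt hlt⟩
    · rintro ⟨hadj, hle⟩
      exact ⟨lt_of_le_of_ne hle (fun h => (G.ne_of_adj hadj) h.symm), hadj⟩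

/-- The linear part of the vector field. -/
noncomputable def lyapLin {N : ℕ} (G : SimpleGraph (Fin N)) [DecidableRel G.Adj]
    (a : Fin N → Fin N → ℝ) (α : Fin N → ℝ) (β : Fin N → Fin N → ℝ) :
    (Fin N → Fin N → ℝ) →ₗ[ℝ] (Fin N → Fin N → ℝ) where
  toFun y := fun i => (-(α i * (a i ⬝ᵥ y i))) • a i -
    ∑ j ∈ Finset.univ.filter (fun j => G.Adj i j), β i j • (y i - y j)
  map_add' y z := by
    funext i k
    simp only [Pi.add_apply, dotProduct, Pi.sub_apply, Pi.smul_apply, smul_eq_mul,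
      Finset.sum_apply, mul_add, neg_add, add_mul, Finset.sum_add_distrib]
    have h1 : ∑ m : Fin N, a i m * (y i m + z i m)
        = (∑ m, a i m * y i m) + ∑ m, a i m * z i m := by
      rw [← Finset.sum_add_distrib]; exact Finset.sum_congr rfl fun m _ => by ring
    have h2 : ∑ j ∈ Finset.univ.filter (fun j => G.Adj i j),
        β i j * (y i k + z i k - (y j k + z j k))
        = (∑ j ∈ Finset.univ.filter (fun j => G.Adj i j), β i j * (y i k - y j k)) +
          ∑ j ∈ Finset.univ.filter (fun j => G.Adj i j), β i j * (z i k - z j k) := by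
      rw [← Finset.sum_add_distrib]; exact Finset.sum_congr rfl fun m _ => by ring
    rw [h2]; ring
  map_smul' c y := by
    funext i k
    simp only [Pi.smul_apply, smul_eq_mul, dotProduct, Pi.sub_apply, Finset.sum_apply,
      RingHom.id_apply]
    have h1 : ∑ m : Fin N, a i m * (c * y i m) = c * ∑ m, a i m * y i m := by
      rw [Finset.mul_sum]; exact Finset.sum_congr rfl fun m _ => by ring
    have h2 : ∑ j ∈ Finset.univ.filter (fun j => G.Adj i j),
        β i j * (c * y i k - c * y j k)
        = c * ∑ j ∈ Finset.univ.filter (fun j => G.Adj i j), β i j * (y i k - y j k) := by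
      rw [Finset.mul_sum]; exact Finset.sum_congr rfl fun m _ => by ring
    rw [h1, h2]; ring

theorem lyapunov_nonincreasing_and_positive
    (N : ℕ) (hN : 2 ≤ N) (G : SimpleGraph (Fin N)) [DecidableRel G.Adj]
    (hG : G.Connected)
    (a : Fin N → Fin N → ℝ) (b : Fin N → ℝ)
    (A : Matrix (Fin N) (Fin N) ℝ) (hA : A = Matrix.of a) (hdet : IsUnit A.det)
    (xstar : Fin N → ℝ) (hxstar : xstar = A⁻¹ *ᵥ b)
    (α : Fin N → ℝ) (hα : ∀ i, 0 < α i)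
    (β : Fin N → Fin N → ℝ) (hβsym : ∀ i j, β i j = β j i)
    (hβ : ∀ i j, G.Adj i j → 0 < β i j)
    (V : (Fin N → Fin N → ℝ) → ℝ)
    (hV : ∀ x : Fin N → Fin N → ℝ,
      V x = ∑ i : Fin N, α i * (a i ⬝ᵥ x i - b i) ^ 2 +
        ∑ p ∈ Finset.univ.filter (fun p : Fin N × Fin N => p.1 < p.2 ∧ G.Adj p.1 p.2),
          β p.1 p.2 * ((x p.1 - x p.2) ⬝ᵥ (x p.1 - x p.2)))
    (x : ℝ → Fin N → Fin N → ℝ)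
    (hsol : ∀ i : Fin N, ∀ t : ℝ, 0 ≤ t →
      HasDerivAt (fun s => x s i)
        ((-(α i * (a i ⬝ᵥ x t i - b i))) • a i -
          ∑ j ∈ Finset.univ.filter (fun j => G.Adj i j), β i j • (x t i - x t j)) t) :
    (∀ s t : ℝ, 0 ≤ s → s ≤ t → V (x t) ≤ V (x s)) ∧
    ((x 0 ≠ fun _ => xstar) → ∀ t : ℝ, 0 ≤ t → 0 < V (x t)) := by
  classical
  -- the vector field
  set F : (Fin N → Fin N → ℝ) → (Fin N → Fin N → ℝ) := fun y i =>
    (-(α i * (a i ⬝ᵥ y i - b i))) • a i -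
      ∑ j ∈ Finset.univ.filter (fun j => G.Adj i j), β i j • (y i - y j) with hF
  -- F as affine map
  have hFaff : ∀ y, F y = lyapLin G a α β y + (fun i => (α i * b i) • a i) := by
    intro y
    funext i k
    simp only [hF, lyapLin, LinearMap.coe_mk, AddHom.coe_mk, Pi.add_apply, Pi.sub_apply,
      Pi.smul_apply, smul_eq_mul]
    ring
  -- Lipschitz continuity of F
  obtain ⟨K, hK⟩ : ∃ K : NNReal, LipschitzWith K F := by
    set Lc := LinearMap.toContinuousLinearMap (lyapLin G a α β) with hLc
    refine ⟨‖Lc‖₊, LipschitzWith.of_dist_le_mul fun y z => ?_⟩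
    rw [hFaff y, hFaff z, dist_add_right]
    exact Lc.lipschitz.dist_le_mul y z
  -- the solution as a curve into the product space
  have hx' : ∀ t : ℝ, 0 ≤ t → HasDerivAt x (F (x t)) t := by
    intro t ht
    exact hasDerivAt_pi.mpr (fun i => hsol i t ht)
  -- A *ᵥ xstar = b
  have hAxstar : A *ᵥ xstar = b := by
    rw [hxstar, Matrix.mulVec_mulVec, Matrix.mul_nonsing_inv A hdet, Matrix.one_mulVec]
  have hax : ∀ i, a i ⬝ᵥ xstar = b i := by
    intro i
    have : (A *ᵥ xstar) i = b i := by rw [hAxstar]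
    simpa [hA, Matrix.mulVec, Matrix.of_apply] using this
  -- equilibrium
  have hFeq : F (fun _ => xstar) = 0 := by
    funext i
    simp [hF, hax i]
  -- nonnegativity of V
  have hVnonneg : ∀ y, 0 ≤ V y := by
    intro y
    rw [hV]
    apply add_nonneg
    · exact Finset.sum_nonneg fun i _ => mul_nonneg (hα i).le (sq_nonneg _)
    · refine Finset.sum_nonneg fun p hp => ?_
      rw [Finset.mem_filter] at hp
      refine mul_nonneg (hβ _ _ hp.2.2).le ?_
      exact Finset.sum_nonneg fun k _ => mul_self_nonneg _
  -- V y = 0 → y is the constant equilibrium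
  have hVzero : ∀ y, V y = 0 → y = fun _ => xstar := by
    intro y hy
    rw [hV] at hy
    have h1nonneg : ∀ i ∈ Finset.univ, 0 ≤ α i * (a i ⬝ᵥ y i - b i) ^ 2 :=
      fun i _ => mul_nonneg (hα i).le (sq_nonneg _)
    have h2nonneg : ∀ p ∈ Finset.univ.filter
        (fun p : Fin N × Fin N => p.1 < p.2 ∧ G.Adj p.1 p.2),
        0 ≤ β p.1 p.2 * ((y p.1 - y p.2) ⬝ᵥ (y p.1 - y p.2)) := by
      intro p hp
      rw [Finset.mem_filter] at hp
      exact mul_nonneg (hβ _ _ hp.2.2).le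
        (Finset.sum_nonneg fun k _ => mul_self_nonneg _)
    have hs1 : ∑ i : Fin N, α i * (a i ⬝ᵥ y i - b i) ^ 2 = 0 := by
      have := add_eq_zero_iff_of_nonneg (Finset.sum_nonneg h1nonneg)
        (Finset.sum_nonneg h2nonneg) |>.mp hy
      exact this.1
    have hs2 : ∑ p ∈ Finset.univ.filter
        (fun p : Fin N × Fin N => p.1 < p.2 ∧ G.Adj p.1 p.2),
        β p.1 p.2 * ((y p.1 - y p.2) ⬝ᵥ (y p.1 - y p.2)) = 0 := by
      have := add_eq_zero_iff_of_nonneg (Finset.sum_nonneg h1nonneg)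
        (Finset.sum_nonneg h2nonneg) |>.mp hy
      exact this.2
    have hai : ∀ i, a i ⬝ᵥ y i = b i := by
      intro i
      have := (Finset.sum_eq_zero_iff_of_nonneg h1nonneg).mp hs1 i (Finset.mem_univ i)
      have h2 : (a i ⬝ᵥ y i - b i) ^ 2 = 0 := by
        rcases mul_eq_zero.mp this with h | h
        · exact absurd h (hα i).ne'
        · exact h
      have := pow_eq_zero_iff (n := 2) (by norm_num) |>.mp h2
      linarith
    have hedge : ∀ i j, G.Adj i j → y i = y j := by
      have key : ∀ p : Fin N × Fin N, p.1 < p.2 → G.Adj p.1 p.2 → y p.1 = y p.2 := by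
        intro p hlt hadj
        have hp : p ∈ Finset.univ.filter
            (fun p : Fin N × Fin N => p.1 < p.2 ∧ G.Adj p.1 p.2) := by
          simp [hlt, hadj]
        have := (Finset.sum_eq_zero_iff_of_nonneg h2nonneg).mp hs2 p hp
        have hdot : (y p.1 - y p.2) ⬝ᵥ (y p.1 - y p.2) = 0 := by
          rcases mul_eq_zero.mp this with h | h
          · exact absurd h (hβ _ _ hadj).ne'
          · exact h
        have hzero : ∀ k, (y p.1 - y p.2) k = 0 := by
          intro k
          have h := (Finset.sum_eq_zero_iff_of_nonneg
            (fun k _ => mul_self_nonneg ((y p.1 - y p.2) k))).mp hdot k (Finset.mem_univ k)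
          exact mul_self_eq_zero.mp h
        funext k
        have := hzero k
        simpa [sub_eq_zero] using this
      intro i j hadj
      rcases lt_trichotomy i j with h | h | h
      · exact key (i, j) h hadj
      · exact absurd h (G.ne_of_adj hadj)
      · exact (key (j, i) h hadj.symm).symm
    have hconn : ∀ i j : Fin N, y i = y j := by
      intro i j
      obtain ⟨w⟩ := hG.preconnected i j
      induction w with
      | nil => rfl
      | cons h p ih => exact (hedge _ _ h).trans ih
    -- all components equal, each satisfies a i ⬝ᵥ c = b i
    set i0 : Fin N := ⟨0, by omega⟩ with hi0
    have hAy : A *ᵥ y i0 = b := by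
      funext j
      have : a j ⬝ᵥ y i0 = a j ⬝ᵥ y j := by rw [hconn i0 j]
      rw [hA]
      simpa [Matrix.mulVec, Matrix.of_apply, this] using hai j
    have hyi0 : y i0 = xstar := by
      have := congrArg (fun v => A⁻¹ *ᵥ v) hAy
      simpa [Matrix.mulVec_mulVec, Matrix.nonsing_inv_mul A hdet, Matrix.one_mulVec,
        hxstar] using this
    funext i
    rw [hconn i i0, hyi0]
  -- derivative of V along the solution
  have hDnonneg : ∀ y : Fin N → Fin N → ℝ, 0 ≤ ∑ i, (F y i ⬝ᵥ F y i) :=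
    fun y => Finset.sum_nonneg fun i _ =>
      Finset.sum_nonneg fun k _ => mul_self_nonneg _
  have hderiv : ∀ t : ℝ, 0 ≤ t → HasDerivAt (fun s => V (x s))
      (-2 * ∑ i, (F (x t) i ⬝ᵥ F (x t) i)) t := by
    intro t ht
    have hVfun : (fun s => V (x s)) = fun s =>
        (∑ i : Fin N, α i * (a i ⬝ᵥ x s i - b i) ^ 2) +
        ∑ p ∈ Finset.univ.filter (fun p : Fin N × Fin N => p.1 < p.2 ∧ G.Adj p.1 p.2),
          β p.1 p.2 * ((x s p.1 - x s p.2) ⬝ᵥ (x s p.1 - x s p.2)) :=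
      funext fun s => hV (x s)
    rw [hVfun]
    have hDk : ∀ i k, HasDerivAt (fun s => x s i k) (F (x t) i k) t := by
      intro i k
      have h := hasDerivAt_pi.mp (hsol i t ht) k
      simpa [hF] using h
    have h1 : ∀ i : Fin N, HasDerivAt (fun s => α i * (a i ⬝ᵥ x s i - b i) ^ 2)
        (α i * ((2 : ℕ) * (a i ⬝ᵥ x t i - b i) ^ 1 * (a i ⬝ᵥ F (x t) i))) t := by
      intro i
      have hdot : HasDerivAt (fun s => a i ⬝ᵥ x s i) (a i ⬝ᵥ F (x t) i) t := by
        simpa [dotProduct] using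
          HasDerivAt.fun_sum (fun k _ => HasDerivAt.const_mul (a i k) (hDk i k))
      exact HasDerivAt.const_mul (α i) ((hdot.sub_const (b i)).pow 2)
    have h2 : ∀ p ∈ Finset.univ.filter
        (fun p : Fin N × Fin N => p.1 < p.2 ∧ G.Adj p.1 p.2),
        HasDerivAt (fun s => β p.1 p.2 * ((x s p.1 - x s p.2) ⬝ᵥ (x s p.1 - x s p.2)))
        (β p.1 p.2 * (∑ k,
          ((F (x t) p.1 k - F (x t) p.2 k) * (x t p.1 k - x t p.2 k) +
           (x t p.1 k - x t p.2 k) * (F (x t) p.1 k - F (x t) p.2 k)))) t := by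
      intro p _
      have hgk : ∀ k, HasDerivAt (fun s => x s p.1 k - x s p.2 k)
          (F (x t) p.1 k - F (x t) p.2 k) t := fun k => (hDk p.1 k).sub (hDk p.2 k)
      have hd : HasDerivAt (fun s => (x s p.1 - x s p.2) ⬝ᵥ (x s p.1 - x s p.2))
          (∑ k, ((F (x t) p.1 k - F (x t) p.2 k) * (x t p.1 k - x t p.2 k) +
             (x t p.1 k - x t p.2 k) * (F (x t) p.1 k - F (x t) p.2 k))) t := by
        simpa [dotProduct] using HasDerivAt.fun_sum (fun k _ => (hgk k).mul (hgk k))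
      exact hd.const_mul (β p.1 p.2)
    have hraw := (HasDerivAt.fun_sum (u := (Finset.univ : Finset (Fin N))) (fun i _ => h1 i)).add (HasDerivAt.fun_sum h2)
    refine hraw.congr_deriv ?_
    symm
    -- the algebraic identity
    set y := x t with hy
    have hedgeval : ∀ p : Fin N × Fin N,
        β p.1 p.2 * (∑ k,
          ((F y p.1 k - F y p.2 k) * (y p.1 k - y p.2 k) +
           (y p.1 k - y p.2 k) * (F y p.1 k - F y p.2 k)))
        = β p.1 p.2 * (2 * ((y p.1 - y p.2) ⬝ᵥ F y p.1))
          + β p.2 p.1 * (2 * ((y p.2 - y p.1) ⬝ᵥ F y p.2)) := by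
      intro p
      have hswapβ : β p.2 p.1 = β p.1 p.2 := (hβsym p.2 p.1)
      simp only [hswapβ, dotProduct, Pi.sub_apply, Finset.mul_sum, ← Finset.sum_add_distrib]
      exact Finset.sum_congr rfl fun k _ => by ring
    have hsym := sym_pairs G (fun i j => β i j * (2 * ((y i - y j) ⬝ᵥ F y i)))
    calc -2 * ∑ i, (F y i ⬝ᵥ F y i)
        = ∑ i : Fin N, (α i * ((2 : ℕ) * (a i ⬝ᵥ y i - b i) ^ 1 * (a i ⬝ᵥ F y i))
            + ∑ j ∈ Finset.univ.filter (fun j => G.Adj i j),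
              β i j * (2 * ((y i - y j) ⬝ᵥ F y i))) := by
          rw [Finset.mul_sum]
          refine Finset.sum_congr rfl fun i _ => ?_
          have hSi : ∑ j ∈ Finset.univ.filter (fun j => G.Adj i j),
              β i j * (2 * ((y i - y j) ⬝ᵥ F y i))
              = 2 * ((∑ j ∈ Finset.univ.filter (fun j => G.Adj i j),
                  β i j • (y i - y j)) ⬝ᵥ F y i) := by
            simp only [dotProduct, Pi.sub_apply, Finset.sum_apply, Pi.smul_apply,
              smul_eq_mul, Finset.mul_sum, Finset.sum_mul]
            rw [Finset.sum_comm]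
            exact Finset.sum_congr rfl fun j _ => Finset.sum_congr rfl fun k _ => by ring
          rw [hSi]
          have hDi : F y i = (-(α i * (a i ⬝ᵥ y i - b i))) • a i -
              ∑ j ∈ Finset.univ.filter (fun j => G.Adj i j), β i j • (y i - y j) := by
            simp [hF]
          have hself : F y i ⬝ᵥ F y i
              = (-(α i * (a i ⬝ᵥ y i - b i))) * (a i ⬝ᵥ F y i)
                - (∑ j ∈ Finset.univ.filter (fun j => G.Adj i j),
                    β i j • (y i - y j)) ⬝ᵥ F y i := by
            nth_rewrite 1 [hDi]
            rw [sub_dotProduct, smul_dotProduct, smul_eq_mul]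
          rw [hself]
          push_cast
          ring
    _ = (∑ i : Fin N, α i * ((2 : ℕ) * (a i ⬝ᵥ y i - b i) ^ 1 * (a i ⬝ᵥ F y i)))
          + ∑ p ∈ Finset.univ.filter (fun p : Fin N × Fin N => p.1 < p.2 ∧ G.Adj p.1 p.2),
            β p.1 p.2 * (∑ k,
              ((F y p.1 k - F y p.2 k) * (y p.1 k - y p.2 k) +
               (y p.1 k - y p.2 k) * (F y p.1 k - F y p.2 k))) := by
          rw [Finset.sum_add_distrib]
          congr 1
          rw [← hsym]
          exact (Finset.sum_congr rfl fun p _ => (hedgeval p)).symm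
  -- Part 1: antitone
  have hanti : AntitoneOn (fun s => V (x s)) (Set.Ici 0) := by
    apply antitoneOn_of_hasDerivWithinAt_nonpos (convex_Ici 0)
      (f' := fun t => -2 * ∑ i, (F (x t) i ⬝ᵥ F (x t) i))
    · intro t ht
      exact (hderiv t ht).continuousAt.continuousWithinAt
    · intro t ht
      rw [interior_Ici] at ht
      exact (hderiv t (le_of_lt ht)).hasDerivWithinAt
    · intro t ht
      rw [interior_Ici] at ht
      have := hDnonneg (x t)
      nlinarith
  constructor
  · intro s t hs hst
    exact hanti (Set.mem_Ici.mpr hs) (Set.mem_Ici.mpr (hs.trans hst)) hst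
  · intro h0 t ht
    by_contra hle
    push_neg at hle
    have hVt : V (x t) = 0 := le_antisymm hle (hVnonneg (x t))
    have hxt : x t = fun _ => xstar := hVzero (x t) hVt
    rcases eq_or_lt_of_le ht with rfl | htpos
    · exact h0 hxt
    · -- backward uniqueness
      have heq : Set.EqOn x (fun _ => (fun _ => xstar)) (Set.Icc 0 t) := by
        apply ODE_solution_unique_of_mem_Icc_left
          (v := fun _ => F) (s := fun _ => Set.univ) (K := K)
          (hv := fun _ _ => hK.lipschitzOnWith)
        · intro u hu
          exact (hx' u hu.1).continuousAt.continuousWithinAt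
        · intro u hu
          exact (hx' u hu.1.le).hasDerivWithinAt
        · intro u _; trivial
        · exact continuousOn_const
        · intro u _
          rw [hFeq]
          exact (hasDerivAt_const u _).hasDerivWithinAt
        · intro u _; trivial
        · exact hxt
      have := heq (Set.mem_Icc.mpr ⟨le_refl 0, ht⟩)
      exact h0 this
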